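/- Suppose y : [s₀,∞) → [0,∞) is C¹ and satisfies y' + c y ≤ C σ^{−m} at each time σ ≥ s₀, with y(s₀) ≤ s₀^{−m'}, where c > 0, m' ≥ m ≥ 1. Then there is a constant C' (depending on c, C, m) such that y(s) ≤ C' s^{−m} for all s ≥ s₀, provided s₀ is large enough. -/

import Mathlib

open Real

/-- Gronwall-type lemma: if `y ≥ 0` is `C¹` with `y' + c y ≤ C s^{-m}` on `[s₀,∞)` and
`y(s₀) ≤ s₀^{-m'}` with `m' ≥ m ≥ 1`, then `y(s) ≤ C' s^{-m}` for all `s ≥ s₀`, where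
`C'` depends only on `c, C, m` and `s₀` is large enough. -/
theorem gronwall_polynomial_decay (c C m : ℝ) (hc : 0 < c) (hC : 0 < C) (hm : 1 ≤ m) :
    ∃ C' : ℝ, 0 < C' ∧
      ∀ m' : ℝ, m ≤ m' →
      ∃ S₀ : ℝ, 0 < S₀ ∧
        ∀ s₀ : ℝ, S₀ ≤ s₀ →
        ∀ y : ℝ → ℝ, ContDiff ℝ 1 y →
          (∀ s, s₀ ≤ s → 0 ≤ y s) →
          (∀ s, s₀ ≤ s → deriv y s + c * y s ≤ C * s ^ (-m)) →
          y s₀ ≤ s₀ ^ (-m') →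
          ∀ s, s₀ ≤ s → y s ≤ C' * s ^ (-m) := by
  set C' : ℝ := max 1 (2 * C / c) with hC'def
  have hC'pos : 0 < C' := lt_of_lt_of_le one_pos (le_max_left _ _)
  have hC'1 : (1 : ℝ) ≤ C' := le_max_left _ _
  have hC'c : 2 * C ≤ C' * c := by
    have := le_max_right (1 : ℝ) (2 * C / c)
    calc 2 * C = (2 * C / c) * c := by field_simp
    _ ≤ C' * c := mul_le_mul_of_nonneg_right this hc.le
  refine ⟨C', hC'pos, ?_⟩
  intro m' hm'
  refine ⟨max 1 (2 * m / c), lt_of_lt_of_le one_pos (le_max_left _ _), ?_⟩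
  intro s₀ hs₀ y hy hpos hineq hinit
  have hs₀1 : (1 : ℝ) ≤ s₀ := le_trans (le_max_left _ _) hs₀
  have hs₀m : 2 * m / c ≤ s₀ := le_trans (le_max_right _ _) hs₀
  have hs₀0 : (0 : ℝ) < s₀ := lt_of_lt_of_le one_pos hs₀1
  have hyd : Differentiable ℝ y := hy.differentiable one_ne_zero
  set w : ℝ → ℝ := fun s => Real.exp (c * s) * (y s - C' * s ^ (-m)) with hw
  have hder : ∀ x : ℝ, 0 < x → HasDerivAt w
      (Real.exp (c * x) * c * (y x - C' * x ^ (-m))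
        + Real.exp (c * x) * (deriv y x - C' * (-m * x ^ (-m - 1)))) x := by
    intro x hx
    have h1 : HasDerivAt (fun s : ℝ => Real.exp (c * s)) (Real.exp (c * x) * c) x := by
      simpa using ((hasDerivAt_id x).const_mul c).exp
    have h2 : HasDerivAt (fun s : ℝ => s ^ (-m)) (-m * x ^ (-m - 1)) x :=
      Real.hasDerivAt_rpow_const (Or.inl hx.ne')
    exact h1.mul (((hyd x).hasDerivAt).sub (h2.const_mul C'))
  have hmono : AntitoneOn w (Set.Ici s₀) := by
    apply antitoneOn_of_deriv_nonpos (convex_Ici s₀)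
    · intro x hx
      exact ((hder x (lt_of_lt_of_le hs₀0 hx)).differentiableAt.continuousAt).continuousWithinAt
    · intro x hx
      rw [interior_Ici] at hx
      exact ((hder x (lt_trans hs₀0 hx)).differentiableAt).differentiableWithinAt
    · intro x hx
      rw [interior_Ici] at hx
      have hx0 : 0 < x := lt_trans hs₀0 hx
      rw [(hder x hx0).deriv]
      set A : ℝ := x ^ (-m) with hA
      set B : ℝ := x ^ (-m - 1) with hB
      have hAnn : 0 ≤ A := Real.rpow_nonneg hx0.le _
      have hBnn : 0 ≤ B := Real.rpow_nonneg hx0.le _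
      have hAB : B * x = A := by
        rw [hA, hB, ← Real.rpow_add_one hx0.ne' (-m - 1)]
        norm_num
      have hineqx : deriv y x + c * y x ≤ C * A := hineq x (le_of_lt (lt_of_le_of_lt (le_refl s₀) hx))
      have hxc : 2 * m ≤ x * c := by
        have : 2 * m / c ≤ x := le_trans hs₀m hx.le
        calc 2 * m = (2 * m / c) * c := by field_simp
        _ ≤ x * c := mul_le_mul_of_nonneg_right this hc.le
      -- key pointwise inequality
      have h5 : C' * (m * B) ≤ C' * (x * c / 2 * B) :=
        mul_le_mul_of_nonneg_left (mul_le_mul_of_nonneg_right (by linarith) hBnn) hC'pos.le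
      have h6 : x * c / 2 * B = c * A / 2 := by rw [← hAB]; ring
      have h7 : (C' * c - 2 * C) * A ≥ 0 := mul_nonneg (by linarith) hAnn
      have key : c * (y x - C' * A) + (deriv y x - C' * (-m * B)) ≤ 0 := by
        nlinarith [h5, h6, h7, hineqx]
      nlinarith [mul_le_mul_of_nonneg_left key (Real.exp_pos (c * x)).le]
  have hws₀ : w s₀ ≤ 0 := by
    have h1 : s₀ ^ (-m') ≤ s₀ ^ (-m) :=
      Real.rpow_le_rpow_of_exponent_le hs₀1 (by linarith)
    have h2 : s₀ ^ (-m) ≤ C' * s₀ ^ (-m) := by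
      nlinarith [Real.rpow_nonneg hs₀0.le (-m)]
    have : y s₀ - C' * s₀ ^ (-m) ≤ 0 := by linarith
    exact mul_nonpos_of_nonneg_of_nonpos (Real.exp_pos _).le this
  intro s hs
  have hws : w s ≤ 0 := le_trans (hmono Set.self_mem_Ici hs hs) hws₀
  have ht : y s - C' * s ^ (-m) ≤ 0 := by
    rcases mul_nonpos_iff.mp hws with ⟨h1, h2⟩ | ⟨h1, h2⟩
    · exact h2
    · linarith [Real.exp_pos (c * s)]
  linarith
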